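/- Fix reals G, M, r₀, r > 0 and a, θ ∈ ℝ. For λ ∈ ℝ define ρ²(λ) = r² + λ²a²cos²θ, Δ(λ) = r² − 2GMλ²r + λ²a², Σ(λ) = (r² + λ²a²)² − λ²a²Δ(λ)sin²θ, D²(λ) = r₀³ + 2λ²a√(GM)·r₀^{3/2} − 3GMλ²r₀², and, for λ in the open interval around 0 on which D²(λ) > 0, A(λ) = (1 − 2GMλ²r/ρ²(λ))·(λ²a√(GM) + r₀^{3/2})²/D²(λ) + 4GMλ⁴ a r sin²θ·(λ²a√(GM) + r₀^{3/2})·√(GM)/(ρ²(λ)·D²(λ)) − GMλ²·Σ(λ)·sin²θ/(ρ²(λ)·D²(λ)), and α(λ) = √(A(λ)). Then: (i) α(0) = 1; (ii) α'(0) = 0; (iii) α''(0) = 3GM/r₀ − 2GM/r − GM r² sin²θ / r₀³; and (iv) if r = r₀ and θ = π/2, then α(λ) = 1 for every λ with D²(λ) > 0. -/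

import Mathlib

open Real

lemma kerr_frac_combine (x y w z q D : ℝ) (hq : q ≠ 0) (hD : D ≠ 0) :
    (1 - x/q)*y/D + w/(q*D) - z/(q*D) = ((q - x)*y + w - z)/(q*D) := by
  field_simp

lemma kerr_aux_sqrt_ratio (n0 n2 n4 n6 d0 d2 d4 : ℝ) (hd0 : 0 < d0) (hn0 : n0 = d0)
    (α : ℝ → ℝ)
    (heq : α =ᶠ[nhds (0:ℝ)] fun l =>
      Real.sqrt ((n0 + n2*l^2 + n4*l^4 + n6*l^6) / (d0 + d2*l^2 + d4*l^4))) :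
    deriv α 0 = 0 ∧ deriv (deriv α) 0 = (n2 - d2) / d0 := by
  set Nf : ℝ → ℝ := fun l => n0 + n2*l^2 + n4*l^4 + n6*l^6 with hNfdef
  set Df : ℝ → ℝ := fun l => d0 + d2*l^2 + d4*l^4 with hDfdef
  set Nf' : ℝ → ℝ := fun l => 2*n2*l + 4*n4*l^3 + 6*n6*l^5 with hN1def
  set Df' : ℝ → ℝ := fun l => 2*d2*l + 4*d4*l^3 with hD1def
  set uf' : ℝ → ℝ := fun l => (Nf' l * Df l - Nf l * Df' l) / (Df l)^2 with hu1def
  set β : ℝ → ℝ := fun l => uf' l / (2 * Real.sqrt (Nf l / Df l)) with hβdef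
  -- basic evaluations at 0
  have hNf0 : Nf 0 = n0 := by simp [hNfdef]
  have hDf0 : Df 0 = d0 := by simp [hDfdef]
  have hN1_0 : Nf' 0 = 0 := by simp [hN1def]
  have hD1_0 : Df' 0 = 0 := by simp [hD1def]
  have hu1_0 : uf' 0 = 0 := by simp [hu1def, hN1_0, hD1_0]
  have hu0 : Nf 0 / Df 0 = 1 := by rw [hNf0, hDf0, hn0, div_self hd0.ne']
  -- derivatives of the polynomials
  have hNfd : ∀ x, HasDerivAt Nf (Nf' x) x := by
    intro x
    have h := (((hasDerivAt_const x n0).add ((hasDerivAt_pow 2 x).const_mul n2)).add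
      ((hasDerivAt_pow 4 x).const_mul n4)).add ((hasDerivAt_pow 6 x).const_mul n6)
    rw [hNfdef, hN1def]
    refine h.congr_deriv ?_
    push_cast
    ring
  have hDfd : ∀ x, HasDerivAt Df (Df' x) x := by
    intro x
    have h := ((hasDerivAt_const x d0).add ((hasDerivAt_pow 2 x).const_mul d2)).add
      ((hasDerivAt_pow 4 x).const_mul d4)
    rw [hDfdef, hD1def]
    refine h.congr_deriv ?_
    push_cast
    ring
  have hN1d : HasDerivAt Nf' (2*n2) 0 := by
    have h := (((hasDerivAt_id (0:ℝ)).const_mul (2*n2)).add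
      ((hasDerivAt_pow 3 (0:ℝ)).const_mul (4*n4))).add ((hasDerivAt_pow 5 (0:ℝ)).const_mul (6*n6))
    rw [hN1def]
    refine h.congr_deriv ?_
    push_cast
    norm_num
  have hD1d : HasDerivAt Df' (2*d2) 0 := by
    have h := ((hasDerivAt_id (0:ℝ)).const_mul (2*d2)).add
      ((hasDerivAt_pow 3 (0:ℝ)).const_mul (4*d4))
    rw [hD1def]
    refine h.congr_deriv ?_
    push_cast
    norm_num
  -- the open set V
  have hcontN : Continuous Nf := by rw [hNfdef]; fun_prop
  have hcontD : Continuous Df := by rw [hDfdef]; fun_prop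
  set V : Set ℝ := Nf ⁻¹' Set.Ioi 0 ∩ Df ⁻¹' Set.Ioi 0 with hVdef
  have hVopen : IsOpen V := (isOpen_Ioi.preimage hcontN).inter (isOpen_Ioi.preimage hcontD)
  have h0V : (0:ℝ) ∈ V := by
    constructor
    · show Nf 0 ∈ Set.Ioi (0:ℝ); rw [hNf0, hn0]; exact hd0
    · show Df 0 ∈ Set.Ioi (0:ℝ); rw [hDf0]; exact hd0
  have hVmem : V ∈ nhds (0:ℝ) := hVopen.mem_nhds h0V
  -- derivative of sqrt(Nf/Df) on V
  have hud : ∀ l ∈ V, HasDerivAt (fun x => Nf x / Df x) (uf' l) l := by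
    intro l hl
    have := (hNfd l).div (hDfd l) (ne_of_gt hl.2)
    rw [hu1def]
    exact this
  have hsq : ∀ l ∈ V, HasDerivAt (fun x => Real.sqrt (Nf x / Df x)) (β l) l := by
    intro l hl
    have hne : Nf l / Df l ≠ 0 := ne_of_gt (div_pos hl.1 hl.2)
    have := (hud l hl).sqrt hne
    rw [hβdef]
    exact this
  -- transfer to α
  have heq' : α =ᶠ[nhds (0:ℝ)] fun l => Real.sqrt (Nf l / Df l) := heq
  have hαd : deriv α =ᶠ[nhds (0:ℝ)] deriv (fun l => Real.sqrt (Nf l / Df l)) := heq'.deriv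
  have hdbeta : deriv α =ᶠ[nhds (0:ℝ)] β := by
    refine hαd.trans (Filter.eventuallyEq_of_mem hVmem fun l hl => ?_)
    exact (hsq l hl).deriv
  constructor
  · have h1 := hdbeta.eq_of_nhds
    rw [h1, hβdef]
    simp [hu1_0]
  · rw [hdbeta.deriv_eq]
    -- compute deriv β 0
    have hQ : HasDerivAt (fun l => Nf' l * Df l - Nf l * Df' l) (2*n2*d0 - n0*(2*d2)) 0 := by
      have h := (hN1d.mul (hDfd 0)).sub ((hNfd 0).mul hD1d)
      refine h.congr_deriv ?_
      rw [hNf0, hDf0, hN1_0, hD1_0]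
      ring
    have hP2 : HasDerivAt (fun l => (Df l)^2) 0 0 := by
      have h := (hDfd 0).pow 2
      refine h.congr_deriv ?_
      rw [hD1_0]
      ring
    have hDfne : (Df 0)^2 ≠ 0 := by rw [hDf0]; positivity
    have huf'd : HasDerivAt uf' ((2*n2*d0 - 2*n0*d2)/d0^2) 0 := by
      have h := hQ.div hP2 hDfne
      rw [hu1def]
      refine h.congr_deriv ?_
      rw [hNf0, hDf0, hN1_0, hD1_0]
      field_simp
      ring
    have hune : Nf 0 / Df 0 ≠ 0 := by rw [hu0]; norm_num
    have hden : HasDerivAt (fun l => 2 * Real.sqrt (Nf l / Df l)) 0 0 := by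
      have h := ((hud 0 h0V).sqrt hune).const_mul 2
      refine h.congr_deriv ?_
      rw [hu1_0]
      ring
    have hdenne : (fun l => 2 * Real.sqrt (Nf l / Df l)) 0 ≠ 0 := by
      simp only [hu0, Real.sqrt_one]
      norm_num
    have hβd : HasDerivAt β ((n2 - d2)/d0) 0 := by
      have h := huf'd.div hden hdenne
      rw [hβdef]
      refine h.congr_deriv ?_
      simp only [hu0, Real.sqrt_one, hu1_0]
      rw [hn0]
      field_simp
      ring
    exact hβd.deriv

set_option maxHeartbeats 2000000 in
theorem kerr_circular_orbit_killing_norm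
    (G M r₀ r : ℝ) (hG : 0 < G) (hM : 0 < M) (hr₀ : 0 < r₀) (hr : 0 < r)
    (a θ : ℝ)
    (ρsq Δ Sig Dsq A α : ℝ → ℝ)
    (hρ : ∀ l, ρsq l = r ^ 2 + l ^ 2 * a ^ 2 * Real.cos θ ^ 2)
    (hΔ : ∀ l, Δ l = r ^ 2 - 2 * G * M * l ^ 2 * r + l ^ 2 * a ^ 2)
    (hSig : ∀ l, Sig l = (r ^ 2 + l ^ 2 * a ^ 2) ^ 2 - l ^ 2 * a ^ 2 * Δ l * Real.sin θ ^ 2)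
    (hD : ∀ l, Dsq l = r₀ ^ 3 + 2 * l ^ 2 * a * Real.sqrt (G * M) * (r₀ * Real.sqrt r₀)
        - 3 * G * M * l ^ 2 * r₀ ^ 2)
    (hA : ∀ l, A l =
        (1 - 2 * G * M * l ^ 2 * r / ρsq l) *
          (l ^ 2 * a * Real.sqrt (G * M) + r₀ * Real.sqrt r₀) ^ 2 / Dsq l
        + 4 * G * M * l ^ 4 * a * r * Real.sin θ ^ 2 *
          (l ^ 2 * a * Real.sqrt (G * M) + r₀ * Real.sqrt r₀) * Real.sqrt (G * M) /
          (ρsq l * Dsq l)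
        - G * M * l ^ 2 * Sig l * Real.sin θ ^ 2 / (ρsq l * Dsq l))
    (hα : ∀ l, α l = Real.sqrt (A l)) :
    α 0 = 1 ∧
    deriv α 0 = 0 ∧
    deriv (deriv α) 0 =
      3 * G * M / r₀ - 2 * G * M / r - G * M * r ^ 2 * Real.sin θ ^ 2 / r₀ ^ 3 ∧
    (r = r₀ → θ = π / 2 → ∀ l, 0 < Dsq l → α l = 1) := by
  have hGM : (0:ℝ) < G * M := mul_pos hG hM
  set k := Real.sqrt (G * M) with hkdef
  set p := r₀ * Real.sqrt r₀ with hpdef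
  have hk2 : k ^ 2 = G * M := Real.sq_sqrt hGM.le
  have hppos : 0 < p := by rw [hpdef]; positivity
  have hp2 : p ^ 2 = r₀ ^ 3 := by rw [hpdef, mul_pow, Real.sq_sqrt hr₀.le]; ring
  set n0 := r^2 * p^2 with hn0d
  set n2v := a^2 * Real.cos θ^2 * p^2 + 2*r^2*a*k*p - 2*G*M*r*p^2 - G*M*r^4*Real.sin θ^2
    with hn2d
  set n4v := 2*a^3*Real.cos θ^2*k*p + r^2*a^2*k^2 - 4*G*M*r*a*k*p
      + 4*G*M*r*a*k*p*Real.sin θ^2 - 2*G*M*r^2*a^2*Real.sin θ^2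
      + G*M*r^2*a^2*Real.sin θ^4 with hn4d
  set n6v := a^4*Real.cos θ^2*k^2 - G*M*a^4*Real.sin θ^2 + G*M*a^4*Real.sin θ^4
      - 2*G*M*r*a^2*k^2 + 4*G*M*r*a^2*k^2*Real.sin θ^2
      - 2*G^2*M^2*r*a^2*Real.sin θ^4 with hn6d
  set d0v := r₀^3 * r^2 with hd0d
  set d2v := 2*r^2*a*k*p + r₀^3*a^2*Real.cos θ^2 - 3*G*M*r₀^2*r^2 with hd2d
  set d4v := 2*a^3*Real.cos θ^2*k*p - 3*G*M*r₀^2*a^2*Real.cos θ^2 with hd4d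
  clear_value k p
  clear_value n0 n2v n4v n6v d0v d2v d4v
  have hd0pos : 0 < d0v := by rw [hd0d]; positivity
  have hρpos : ∀ l, 0 < ρsq l := fun l => by rw [hρ]; positivity
  have hDen : ∀ l, ρsq l * Dsq l = d0v + d2v*l^2 + d4v*l^4 := by
    intro l
    rw [hρ, hD, hd0d, hd2d, hd4d]
    ring
  have hAN : ∀ l, Dsq l ≠ 0 →
      A l = (n0 + n2v*l^2 + n4v*l^4 + n6v*l^6) / (d0v + d2v*l^2 + d4v*l^4) := by
    intro l hl
    rw [hA l, kerr_frac_combine _ _ _ _ _ _ (hρpos l).ne' hl, hDen l]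
    congr 1
    rw [hρ l, hSig l, hΔ l, hn0d, hn2d, hn4d, hn6d]
    ring
  have hDc : Continuous Dsq := by
    have : Dsq = fun l => r₀ ^ 3 + 2 * l ^ 2 * a * k * p - 3 * G * M * l ^ 2 * r₀ ^ 2 :=
      funext hD
    rw [this]; fun_prop
  have hD0pos : 0 < Dsq 0 := by
    rw [hD 0]; norm_num; positivity
  have hU : {l : ℝ | 0 < Dsq l} ∈ nhds (0:ℝ) :=
    (isOpen_lt continuous_const hDc).mem_nhds hD0pos
  have heq : α =ᶠ[nhds (0:ℝ)] fun l =>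
      Real.sqrt ((n0 + n2v*l^2 + n4v*l^4 + n6v*l^6) / (d0v + d2v*l^2 + d4v*l^4)) := by
    filter_upwards [hU] with l hl
    rw [hα l, hAN l hl.ne']
  have hn0eq : n0 = d0v := by rw [hn0d, hd0d, hp2]; ring
  obtain ⟨h2, h3⟩ := kerr_aux_sqrt_ratio n0 n2v n4v n6v d0v d2v d4v hd0pos hn0eq α heq
  refine ⟨?_, h2, ?_, ?_⟩
  · rw [hα 0, hAN 0 hD0pos.ne']
    have h00 : (n0 + n2v*0^2 + n4v*0^4 + n6v*0^6) / (d0v + d2v*0^2 + d4v*0^4) = 1 := by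
      rw [hn0eq]
      norm_num
      exact hd0pos.ne'
    rw [h00, Real.sqrt_one]
  · rw [h3]
    have hkey : n2v - d2v = 3*G*M*r^2*r₀^2 - 2*G*M*r*r₀^3 - G*M*r^4*Real.sin θ^2 := by
      rw [hn2d, hd2d]
      linear_combination (a^2*Real.cos θ^2 - 2*G*M*r) * hp2
    rw [hkey, hd0d]
    field_simp
  · intro hrr hθ l hl
    have hden_pos : 0 < d0v + d2v*l^2 + d4v*l^4 := by
      rw [← hDen l]; exact mul_pos (hρpos l) hl
    rw [hα l, hAN l hl.ne']
    have hNeqD : n0 + n2v*l^2 + n4v*l^4 + n6v*l^6 = d0v + d2v*l^2 + d4v*l^4 := by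
      rw [hn0d, hn2d, hn4d, hn6d, hd0d, hd2d, hd4d, hrr, hθ]
      rw [Real.cos_pi_div_two, Real.sin_pi_div_two]
      linear_combination (r₀^2*a^2*l^4 + 2*G*M*r₀*a^2*l^6) * hk2
        + (r₀^2 - 2*G*M*r₀*l^2) * hp2
    rw [hNeqD, div_self hden_pos.ne', Real.sqrt_one]
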